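/- Let λ be an infinite regular cardinal and X a linearly ordered set with |X| = λ. Then X contains a subset order-isomorphic to λ, or a subset order-isomorphic to λ with the reverse order, or a subset Y of order type ω (or ω reversed) that is λ-full in X. -/

import Mathlib

open Cardinal Set

universe u

/-- `Y` is `l`-full on the right in `X`: for every `y ∈ Y`, the union of the
intervals `(y, y')_X` over larger elements `y' ∈ Y` has cardinality `l`. -/
def FullRight {X : Type u} [LinearOrder X] (l : Cardinal.{u}) (Y : Set X) : Prop :=
  ∀ y ∈ Y, #{x : X | ∃ y' ∈ Y, y < y' ∧ y < x ∧ x < y'} = l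

/-- `Y` is `l`-full on the left in `X`. -/
def FullLeft {X : Type u} [LinearOrder X] (l : Cardinal.{u}) (Y : Set X) : Prop :=
  ∀ y ∈ Y, #{x : X | ∃ y' ∈ Y, y' < y ∧ y' < x ∧ x < y} = l

/-- `Y` is completely `l`-full in `X`: every interval of `X` between two
elements of `Y` has cardinality `l`. -/
def CompletelyFull {X : Type u} [LinearOrder X] (l : Cardinal.{u}) (Y : Set X) : Prop :=
  ∀ y ∈ Y, ∀ y' ∈ Y, y < y' → #{x : X | y < x ∧ x < y'} = l

/-- Key recursion lemma: if `C` has cardinality at least `l` (regular) and all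
initial segments of `C` are small, then there is a strictly increasing
`l`-sequence. -/
lemma exists_strictMono_of_segments_small {X : Type u} [LinearOrder X] {l : Cardinal.{u}}
    (hl : l.IsRegular) (C : Set X) (hC : l ≤ #C)
    (hseg : ∀ v ∈ C, #{c : X | c ∈ C ∧ c ≤ v} < l) :
    ∃ f : l.ord.ToType → X, StrictMono f := by
  haveI : IsWellOrder l.ord.ToType ((· < ·) : l.ord.ToType → l.ord.ToType → Prop) :=
    isWellOrder_lt
  have hwo : ∀ α : l.ord.ToType, #{β : l.ord.ToType // β < α} < l := by
    intro α
    have h1 := Ordinal.typein_lt_self (o := l.ord) α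
    have h2 := Cardinal.lt_ord.1 h1
    have h3 := Ordinal.card_typein (r := ((· < ·) : l.ord.ToType → l.ord.ToType → Prop)) α
    rw [← h3]
    exact h2
  have key : ∀ (α : l.ord.ToType) (ih : ∀ β, β < α → ↥C),
      ∃ c ∈ C, ∀ β (h : β < α), (ih β h : X) < c := by
    intro α ih
    set Bad : Set X := ⋃ β : {β : l.ord.ToType // β < α},
      {c : X | c ∈ C ∧ c ≤ (ih β.1 β.2 : X)} with hBadDef
    have hB : #Bad < l := by
      refine lt_of_le_of_lt mk_iUnion_le_sum_mk ?_
      refine Cardinal.sum_lt_of_isRegular hl ?_ ?_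
      · exact hwo α
      · exact fun β => hseg _ (ih β.1 β.2).2
    have hns : ¬ C ⊆ Bad := fun hsub =>
      (((Cardinal.mk_le_mk_of_subset hsub).trans_lt hB).not_ge hC)
    obtain ⟨c, hcC, hcB⟩ := Set.not_subset.1 hns
    refine ⟨c, hcC, fun β hβ => ?_⟩
    by_contra hle
    exact hcB (Set.mem_iUnion.2 ⟨⟨β, hβ⟩, hcC, not_lt.1 hle⟩)
  set G : ∀ α : l.ord.ToType, (∀ β, β < α → ↥C) → ↥C :=
    fun α ih => ⟨(key α ih).choose, (key α ih).choose_spec.1⟩ with hG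
  set F : ∀ _ : l.ord.ToType, ↥C := WellFoundedLT.fix G with hFdef
  have hF : ∀ α, F α = G α (fun β _ => F β) := WellFoundedLT.fix_eq G
  refine ⟨fun α => (F α : X), fun β α h => ?_⟩
  have := (key α (fun β _ => F β)).choose_spec.2 β h
  calc (F β : X) < ((G α (fun β _ => F β) : ↥C) : X) := this
    _ = (F α : X) := by rw [hF α]

/-- Theorem 2.2: a linear order of infinite regular cardinality `l` has a
subset of order type `l` or reverse type `l`, or an `ω`- or `ω←`-ordered
`l`-full subset. -/
theorem stmt0 (l : Cardinal.{u}) (hl : l.IsRegular) (X : Type u) [LinearOrder X]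
    (hX : #X = l) :
    (∃ f : l.ord.ToType → X, StrictMono f) ∨
    (∃ f : l.ord.ToType → X, StrictAnti f) ∨
    (∃ f : ℕ → X, StrictMono f ∧ FullRight l (Set.range f)) ∨
    (∃ f : ℕ → X, StrictAnti f ∧ FullLeft l (Set.range f)) := by
  have hℵ : ℵ₀ ≤ l := hl.aleph0_le
  have h1l : (1 : Cardinal) < l := one_lt_aleph0.trans_le hℵ
  set E : X → X → Prop := fun x y => #(Set.uIcc x y) < l with hE
  have hErefl : ∀ x, E x x := by
    intro x
    show #(Set.uIcc x x) < l
    rw [Set.uIcc_self, Cardinal.mk_singleton]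
    exact h1l
  have hEsymm : ∀ {x y}, E x y → E y x := by
    intro x y h
    show #(Set.uIcc y x) < l
    rwa [Set.uIcc_comm]
  have hEtrans : ∀ {x y z}, E x y → E y z → E x z := by
    intro x y z h1 h2
    show #(Set.uIcc x z) < l
    refine lt_of_le_of_lt (Cardinal.mk_le_mk_of_subset
      (Set.uIcc_subset_uIcc_union_uIcc (b := y))) ?_
    exact lt_of_le_of_lt (Cardinal.mk_union_le _ _) (Cardinal.add_lt_of_lt hℵ h1 h2)
  by_cases hA : ∃ x : X, l ≤ #{y : X | E x y}
  · -- some equivalence class is big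
    obtain ⟨x, hx⟩ := hA
    set C : Set X := {y : X | E x y} with hCdef
    have hsplit : l ≤ #(C ∩ Set.Ici x : Set X) ∨ l ≤ #(C ∩ Set.Iic x : Set X) := by
      by_contra h
      push_neg at h
      have hsub : C ⊆ (C ∩ Set.Ici x) ∪ (C ∩ Set.Iic x) := by
        intro y hy
        rcases le_total x y with h' | h'
        · exact Or.inl ⟨hy, h'⟩
        · exact Or.inr ⟨hy, h'⟩
      exact ((hx.trans ((Cardinal.mk_le_mk_of_subset hsub).trans
        (Cardinal.mk_union_le _ _))).trans_lt
        (Cardinal.add_lt_of_lt hℵ h.1 h.2)).false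
    rcases hsplit with hbig | hbig
    · left
      refine exists_strictMono_of_segments_small hl (C ∩ Set.Ici x) hbig ?_
      rintro v ⟨hvC, hvx⟩
      refine lt_of_le_of_lt (Cardinal.mk_le_mk_of_subset ?_) (hvC : E x v)
      rintro c ⟨⟨_, hcx⟩, hcv⟩
      rw [Set.uIcc_of_le hvx]
      exact ⟨hcx, hcv⟩
    · right; left
      have hbig' : l ≤ #((C ∩ Set.Iic x : Set X) : Set Xᵒᵈ) := hbig
      have hseg' : ∀ v ∈ ((C ∩ Set.Iic x : Set X) : Set Xᵒᵈ),
          #{c : Xᵒᵈ | c ∈ ((C ∩ Set.Iic x : Set X) : Set Xᵒᵈ) ∧ c ≤ v} < l := by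
        rintro v ⟨hvC, hvx⟩
        refine lt_of_le_of_lt (Cardinal.mk_le_mk_of_subset ?_) (hvC : E x v)
        rintro c ⟨⟨_, hcx⟩, hcv⟩
        -- here `hcv : c ≤ v` in `Xᵒᵈ`, i.e. `v ≤ c` in `X`; `hcx : c ≤ x` in `X`
        rw [Set.uIcc_comm, Set.uIcc_of_le (hvx : (v : X) ≤ x)]
        exact ⟨(hcv : (v : X) ≤ c), hcx⟩
      obtain ⟨f, hf⟩ := exists_strictMono_of_segments_small (X := Xᵒᵈ) hl
        ((C ∩ Set.Iic x : Set X) : Set Xᵒᵈ) hbig' hseg'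
      exact ⟨fun α => OrderDual.ofDual (f α), fun a b hab => hf hab⟩
  · -- all classes are small: build an ω-sequence of pairwise inequivalent points
    push_neg at hA
    letI s : Setoid X := ⟨E, fun _ => hErefl _, hEsymm, hEtrans⟩
    have hQ : l ≤ #(Quotient s) := by
      by_contra h
      push_neg at h
      have hXsum : #X = Cardinal.sum fun q : Quotient s => #{x : X // Quotient.mk s x = q} := by
        rw [← Cardinal.mk_sigma]
        exact (Cardinal.mk_congr (Equiv.sigmaFiberEquiv (Quotient.mk s))).symm
      have : #X < l := by
        rw [hXsum]
        refine Cardinal.sum_lt_of_isRegular hl h ?_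
        intro q
        refine lt_of_le_of_lt (Cardinal.mk_le_mk_of_subset (s := {x : X | Quotient.mk s x = q})
          (t := {y : X | E q.out y}) ?_) (hA q.out)
        intro z hz
        have : Quotient.mk s q.out = Quotient.mk s z := by
          rw [hz]; exact (Quotient.out_eq q).symm ▸ rfl
        exact Quotient.exact this
      exact this.ne hX
    haveI hQinf : Infinite (Quotient s) := Cardinal.infinite_iff.2 (hℵ.trans hQ)
    set e := Infinite.natEmbedding (Quotient s) with he
    set a : ℕ → X := fun n => (e n).out with ha
    have hpair : ∀ m n : ℕ, m ≠ n → ¬ E (a m) (a n) := by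
      intro m n hmn hEmn
      apply hmn
      apply e.injective
      have : Quotient.mk s (a m) = Quotient.mk s (a n) := Quotient.sound hEmn
      rwa [ha, Quotient.out_eq, Quotient.out_eq] at this
    have hIoo : ∀ p q : X, ¬ E p q → p < q → l ≤ #(Set.Ioo p q) := by
      intro p q hpq hlt
      by_contra h
      push_neg at h
      apply hpq
      show #(Set.uIcc p q) < l
      rw [Set.uIcc_of_le hlt.le]
      have hsub : Set.Icc p q ⊆ insert p (insert q (Set.Ioo p q)) := by
        rintro c ⟨h1, h2⟩
        rcases eq_or_lt_of_le h1 with rfl | h1'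
        · exact Set.mem_insert _ _
        rcases eq_or_lt_of_le h2 with rfl | h2'
        · exact Set.mem_insert_of_mem _ (Set.mem_insert _ _)
        · exact Set.mem_insert_of_mem _ (Set.mem_insert_of_mem _ ⟨h1', h2'⟩)
      refine lt_of_le_of_lt (Cardinal.mk_le_mk_of_subset hsub) ?_
      refine lt_of_le_of_lt (Cardinal.mk_insert_le.trans
        (add_le_add (Cardinal.mk_insert_le.trans (add_le_add le_rfl (le_refl 1))) (le_refl 1))) ?_
      exact Cardinal.add_lt_of_lt hℵ (Cardinal.add_lt_of_lt hℵ h h1l) h1l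
    obtain ⟨g, hg | hg⟩ := exists_increasing_or_nonincreasing_subseq (· ≤ · : X → X → Prop) a
    · -- increasing subsequence
      right; right; left
      set f : ℕ → X := fun n => a (g n) with hfdef
      have hainj : Function.Injective a := fun m n hmn => by
        by_contra hne
        exact hpair m n hne (hmn ▸ hErefl (a n))
      have hfmono : StrictMono f := by
        intro m n hmn
        exact lt_of_le_of_ne (hg m n hmn)
          (fun hcon => (g.injective.ne (hmn.ne)) (hainj hcon))
      refine ⟨f, hfmono, ?_⟩
      rintro y ⟨m, rfl⟩
      refine le_antisymm (hX ▸ Cardinal.mk_set_le _) ?_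
      refine le_trans (hIoo (f m) (f (m + 1))
        (hpair _ _ (g.injective.ne (Nat.succ_ne_self m).symm))
        (hfmono (Nat.lt_succ_self m))) (Cardinal.mk_le_mk_of_subset ?_)
      rintro z ⟨hz1, hz2⟩
      exact ⟨f (m + 1), ⟨m + 1, rfl⟩, hfmono (Nat.lt_succ_self m), hz1, hz2⟩
    · -- decreasing subsequence
      right; right; right
      set f : ℕ → X := fun n => a (g n) with hfdef
      have hfanti : StrictAnti f := by
        intro m n hmn
        exact lt_of_not_ge (hg m n hmn)
      refine ⟨f, hfanti, ?_⟩
      rintro y ⟨m, rfl⟩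
      refine le_antisymm (hX ▸ Cardinal.mk_set_le _) ?_
      refine le_trans (hIoo (f (m + 1)) (f m)
        (hpair _ _ (g.injective.ne (Nat.succ_ne_self m)))
        (hfanti (Nat.lt_succ_self m))) (Cardinal.mk_le_mk_of_subset ?_)
      rintro z ⟨hz1, hz2⟩
      exact ⟨f (m + 1), ⟨m + 1, rfl⟩, hfanti (Nat.lt_succ_self m), hz1, hz2⟩
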